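/- For any words u and v, the number of distinct non-empty palindromic factors of u·v is at most |u| + |v|. -/

import Mathlib

/-- For any words u and v, the number of distinct non-empty palindromic factors of
u·v is at most |u| + |v|. -/
theorem stmt_14 {α : Type*} (u v : List α) :
    {p : List α | p ≠ [] ∧ p.reverse = p ∧ p <:+: u ++ v}.ncard ≤
      u.length + v.length := by
  classical
  set w := u ++ v with hw
  set n := u.length + v.length with hn
  have hwlen : w.length = n := by simp [hw, hn]
  set S := {p : List α | p ≠ [] ∧ p.reverse = p ∧ p <:+: w} with hS
  -- the minimal end position of an occurrence
  let f : List α → ℕ := fun p =>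
    if h : ∃ i, p <:+ w.take i then Nat.find h else 0
  have hex : ∀ p ∈ S, ∃ i, i ≤ n ∧ p <:+ w.take i := by
    rintro p ⟨-, -, s, t, hst⟩
    refine ⟨s.length + p.length, ?_, ?_⟩
    · have h2 : s.length + p.length + t.length = n := by
        have := congrArg List.length hst
        simp [List.length_append, hwlen] at this
        omega
      omega
    · have : w.take (s.length + p.length) = s ++ p := by
        rw [← hst]
        have : ((s ++ p) ++ t).take (s ++ p).length = s ++ p := List.take_left
        simpa [List.length_append] using this
      rw [this]
      exact List.suffix_append s p
  have hfspec : ∀ p ∈ S, p <:+ w.take (f p) := by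
    intro p hp
    obtain ⟨i, -, hi⟩ := hex p hp
    have h : ∃ i, p <:+ w.take i := ⟨i, hi⟩
    simp only [f, dif_pos h]
    exact Nat.find_spec h
  have hfmin : ∀ p ∈ S, ∀ j, p <:+ w.take j → f p ≤ j := by
    intro p hp j hj
    obtain ⟨i, -, hi⟩ := hex p hp
    have h : ∃ i, p <:+ w.take i := ⟨i, hi⟩
    simp only [f, dif_pos h]
    exact Nat.find_le hj
  have hmem : ∀ p ∈ S, f p ∈ (↑(Finset.Icc 1 n) : Set ℕ) := by
    intro p hp
    obtain ⟨i, hin, hi⟩ := hex p hp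
    simp only [Finset.coe_Icc, Set.mem_Icc]
    constructor
    · rcases Nat.eq_zero_or_pos (f p) with h0 | h1
      · exfalso
        have := hfspec p hp
        rw [h0] at this
        simp at this
        exact hp.1 this
      · exact h1
    · exact le_trans (hfmin p hp i hi) hin
  -- key: a proper palindromic suffix would occur earlier
  have key : ∀ p ∈ S, ∀ q ∈ S, p <:+ q → f p = f q → p = q := by
    intro p hp q hq hpq heq
    by_contra hne
    have hlen : p.length < q.length := by
      rcases lt_or_eq_of_le hpq.length_le with h | h
      · exact h
      · exact absurd (List.IsSuffix.eq_of_length hpq h) hne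
    -- p is also a prefix of q
    have hpref : p <+: q := by
      have := List.reverse_prefix.mpr hpq
      rwa [hp.2.1, hq.2.1] at this
    obtain ⟨t, ht⟩ := hpref
    have htne : t ≠ [] := by
      intro h
      rw [h, List.append_nil] at ht
      exact hne ht
    obtain ⟨s, hs⟩ := hfspec q hq
    -- w.take (f q) = s ++ p ++ t
    have hsw : s ++ p ++ t = w.take (f q) := by
      rw [List.append_assoc, ht, hs]
    have hjlt : s.length + p.length < f q := by
      have h1 : (w.take (f q)).length ≤ f q := List.length_take_le _ _
      have h2 : (w.take (f q)).length = s.length + p.length + t.length := by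
        rw [← hsw]; simp [List.length_append]; omega
      have h3 : 0 < t.length := List.length_pos_iff.mpr htne
      omega
    have htake : w.take (s.length + p.length) = s ++ p := by
      have h1 : (w.take (f q)).take (s.length + p.length) = s ++ p := by
        rw [← hsw]
        have : ((s ++ p) ++ t).take (s ++ p).length = s ++ p := List.take_left
        simpa [List.length_append] using this
      rw [List.take_take] at h1
      rwa [min_eq_left hjlt.le] at h1
    have : f p ≤ s.length + p.length := by
      apply hfmin p hp
      rw [htake]
      exact List.suffix_append s p
    omega
  have hinj : Set.InjOn f S := by
    intro p hp q hq heq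
    have h1 := hfspec p hp
    have h2 := hfspec q hq
    rw [heq] at h1
    rcases List.suffix_or_suffix_of_suffix h1 h2 with h | h
    · exact key p hp q hq h heq
    · exact (key q hq p hp h heq.symm).symm
  have := Set.ncard_le_ncard_of_injOn f hmem hinj (Finset.finite_toSet _)
  calc S.ncard ≤ (↑(Finset.Icc 1 n) : Set ℕ).ncard := this
    _ = n := by rw [Set.ncard_coe_finset]; simp
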